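/- arXiv:2412.02947 — 2 statements merged into one kernel-verified Lean document; each statement's English description precedes it below -/
import Mathlib

section
/- Let x₁, x₂ ∈ ℝ with cos x₁ ≠ 0 and set λ = −cos x₂ / cos x₁. Then (1−λ)³·sin(x₁+x₂) − λ³·sin x₁ + sin x₂ = 0 if and only if sin(x₁+x₂)·[(cos x₁ + cos x₂)³ + cos²x₁ + cos²x₂ − cos x₁·cos x₂·cos(x₁−x₂)] = 0. -/
open Real

/-- With `λ = -cos x₂ / cos x₁` (for `cos x₁ ≠ 0`), the vanishing of the cubic coefficient
`(1-λ)³ sin(x₁+x₂) - λ³ sin x₁ + sin x₂` is equivalent to the factored condition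
`sin(x₁+x₂) ((cos x₁ + cos x₂)³ + cos²x₁ + cos²x₂ - cos x₁ cos x₂ cos(x₁-x₂)) = 0`. -/
theorem hex_cubic_coefficient_vanishing_iff (x₁ x₂ : ℝ) (hc : Real.cos x₁ ≠ 0)
    (lam : ℝ) (hlam : lam = -Real.cos x₂ / Real.cos x₁) :
    (1 - lam) ^ 3 * Real.sin (x₁ + x₂) - lam ^ 3 * Real.sin x₁ + Real.sin x₂ = 0 ↔
      Real.sin (x₁ + x₂) * ((Real.cos x₁ + Real.cos x₂) ^ 3 + Real.cos x₁ ^ 2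
          + Real.cos x₂ ^ 2 - Real.cos x₁ * Real.cos x₂ * Real.cos (x₁ - x₂)) = 0 := by
  have h1 := Real.sin_sq_add_cos_sq x₁
  have h2 := Real.sin_sq_add_cos_sq x₂
  have key : Real.cos x₁ ^ 3 *
      ((1 - lam) ^ 3 * Real.sin (x₁ + x₂) - lam ^ 3 * Real.sin x₁ + Real.sin x₂) =
      Real.sin (x₁ + x₂) * ((Real.cos x₁ + Real.cos x₂) ^ 3 + Real.cos x₁ ^ 2
          + Real.cos x₂ ^ 2 - Real.cos x₁ * Real.cos x₂ * Real.cos (x₁ - x₂)) := by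
    subst hlam
    rw [Real.sin_add, Real.cos_sub]
    field_simp
    linear_combination (Real.cos x₁ * Real.cos x₂ ^ 2 * Real.sin x₂) * h1 +
      (Real.cos x₁ ^ 2 * Real.cos x₂ * Real.sin x₁) * h2
  constructor
  · intro h; rw [← key, h, mul_zero]
  · intro h
    have := key.trans h
    rcases mul_eq_zero.mp this with h' | h'
    · exact absurd (pow_eq_zero_iff (by norm_num) |>.mp h') hc
    · exact h'
end

section
/- Let A, B ∈ ℝ satisfy cos²B > 1/2, sin(2B) ≠ 0, and sin²A = cos²B·(1 − |sin 2B|)/(2cos²B − 1). Then cos²B·(1 − 2cos²B) + sin²A < 0, i.e. −2cos⁴B − cos²A + cos²B + 1 < 0. -/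
open Real

/-- Case (I) of the appendix: if `cos²B > 1/2`, `sin 2B ≠ 0` and
`sin²A = cos²B(1 - |sin 2B|)/(2cos²B - 1)`, then
`cos²B(1 - 2cos²B) + sin²A < 0`, i.e. `-2cos⁴B - cos²A + cos²B + 1 < 0`. -/
theorem hex_appendix_case_one (A B : ℝ) (h1 : 1 / 2 < Real.cos B ^ 2)
    (h2 : Real.sin (2 * B) ≠ 0)
    (h3 : Real.sin A ^ 2
      = Real.cos B ^ 2 * (1 - |Real.sin (2 * B)|) / (2 * Real.cos B ^ 2 - 1)) :
    Real.cos B ^ 2 * (1 - 2 * Real.cos B ^ 2) + Real.sin A ^ 2 < 0 ∧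
      -2 * Real.cos B ^ 4 - Real.cos A ^ 2 + Real.cos B ^ 2 + 1 < 0 := by
  have hd : 0 < 2 * Real.cos B ^ 2 - 1 := by linarith
  have hs2 : Real.sin (2 * B) ^ 2 = 4 * Real.cos B ^ 2 * (1 - Real.cos B ^ 2) := by
    rw [Real.sin_two_mul]
    nlinarith [Real.sin_sq_add_cos_sq B]
  have habs : |Real.sin (2 * B)| ^ 2 = 4 * Real.cos B ^ 2 * (1 - Real.cos B ^ 2) := by
    rw [sq_abs]; exact hs2
  have hpos : 0 < |Real.sin (2 * B)| := abs_pos.mpr h2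
  have hlt1 : |Real.sin (2 * B)| < 1 := by nlinarith
  have h3' : Real.sin A ^ 2 * (2 * Real.cos B ^ 2 - 1)
      = Real.cos B ^ 2 * (1 - |Real.sin (2 * B)|) := by
    rw [h3]; field_simp
    exact mul_div_cancel_right₀ _ (by linarith)
  have key : Real.cos B ^ 2 * (1 - 2 * Real.cos B ^ 2) + Real.sin A ^ 2 < 0 := by
    nlinarith [mul_pos (mul_pos (by linarith : (0:ℝ) < Real.cos B ^ 2) hpos)
      (by linarith : (0:ℝ) < 1 - |Real.sin (2 * B)|)]
  refine ⟨key, ?_⟩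
  have hcA := Real.sin_sq_add_cos_sq A
  nlinarith [key]
end
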